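/- Let I ⊆ ℝ be an interval and let z : I → Z and w : I → W be differentiable maps satisfying z'(t) = J_A(z(t))(∇H_A(z(t)) + C*(w(t))) and w'(t) = −D(w(t) + C z(t)) for all t ∈ I. Then for all t ∈ I, the function t ↦ H_A(z(t)) + ⟨C z(t), w(t)⟩ + (1/2)‖w(t)‖² is differentiable with derivative −⟨D(w(t) + C z(t)), w(t) + C z(t)⟩. -/

import Mathlib

open RealInnerProductSpace

/-- Let `I ⊆ ℝ` be an interval and `z : I → Z`, `w : I → W`
differentiable with `z'(t) = J_A(z(t))(∇H_A(z(t)) + C*(w(t)))` and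
`w'(t) = −D(w(t) + C z(t))` on `I`.  Then
`t ↦ H_A(z(t)) + ⟨C z(t), w(t)⟩ + ½‖w(t)‖²` is differentiable on `I` with derivative
`−⟨D(w(t) + C z(t)), w(t) + C z(t)⟩`. -/
theorem energy_dissipation_along_coarse_grained_flow
    {Z : Type*} [NormedAddCommGroup Z] [InnerProductSpace ℝ Z] [FiniteDimensional ℝ Z]
    {W : Type*} [NormedAddCommGroup W] [InnerProductSpace ℝ W] [FiniteDimensional ℝ W]
    (C : Z →L[ℝ] W)
    (HA : Z → ℝ) (hHA : ContDiff ℝ 1 HA)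
    (D : W →L[ℝ] W)
    (JA : Z → Z →L[ℝ] Z)
    (hJA : ∀ z : Z, ContinuousLinearMap.adjoint (JA z) = -(JA z))
    (I : Set ℝ) (hI : Set.OrdConnected I)
    (z : ℝ → Z) (w : ℝ → W)
    (hz : ∀ t ∈ I, HasDerivWithinAt z
      (JA (z t) (gradient HA (z t) + ContinuousLinearMap.adjoint C (w t))) I t)
    (hw : ∀ t ∈ I, HasDerivWithinAt w (-(D (w t + C (z t)))) I t) :
    ∀ t ∈ I, HasDerivWithinAt
      (fun t : ℝ => HA (z t) + ⟪C (z t), w t⟫ + (1 / 2) * ‖w t‖ ^ 2)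
      (-⟪D (w t + C (z t)), w t + C (z t)⟫) I t := by
  intro t ht
  have hz' := hz t ht
  have hw' := hw t ht
  set v : Z := gradient HA (z t) + ContinuousLinearMap.adjoint C (w t) with hv
  set w' : W := -(D (w t + C (z t))) with hwdef
  have hgrad : HasGradientAt HA (gradient HA (z t)) (z t) :=
    (hHA.differentiable one_ne_zero (z t)).hasGradientAt
  have h1 : HasDerivWithinAt (fun s => HA (z s)) ⟪gradient HA (z t), JA (z t) v⟫ I t := by
    have := hgrad.hasFDerivAt.comp_hasDerivWithinAt t hz'
    exact this
  have hCz : HasDerivWithinAt (fun s => C (z s)) (C (JA (z t) v)) I t :=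
    C.hasFDerivAt.comp_hasDerivWithinAt t hz'
  have h2 : HasDerivWithinAt (fun s => ⟪C (z s), w s⟫)
      (⟪C (z t), w'⟫ + ⟪C (JA (z t) v), w t⟫) I t := hCz.inner ℝ hw'
  have h3 : HasDerivWithinAt (fun s => (1/2 : ℝ) * ‖w s‖ ^ 2)
      ((1/2 : ℝ) * (⟪w t, w'⟫ + ⟪w', w t⟫)) I t := by
    have := (hw'.inner ℝ hw').const_mul (1/2 : ℝ)
    refine this.congr (fun s _ => ?_) ?_ <;>
      simp [real_inner_self_eq_norm_sq]
  have hsum := (h1.add h2).add h3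
  have hskew : ⟪gradient HA (z t), JA (z t) v⟫ + ⟪C (JA (z t) v), w t⟫ = 0 := by
    have e1 : ⟪C (JA (z t) v), w t⟫ = ⟪JA (z t) v, ContinuousLinearMap.adjoint C (w t)⟫ := by
      rw [← ContinuousLinearMap.adjoint_inner_right]
    have e2 : ⟪JA (z t) v, ContinuousLinearMap.adjoint C (w t)⟫
        = ⟪ContinuousLinearMap.adjoint C (w t), JA (z t) v⟫ := real_inner_comm _ _
    have key : ⟪v, JA (z t) v⟫ = 0 := by
      have h := ContinuousLinearMap.adjoint_inner_right (JA (z t)) v v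
      rw [hJA (z t)] at h
      have hsymm : ⟪JA (z t) v, v⟫ = ⟪v, JA (z t) v⟫ := real_inner_comm _ _
      simp only [ContinuousLinearMap.neg_apply, inner_neg_right] at h
      linarith [h, hsymm]
    calc ⟪gradient HA (z t), JA (z t) v⟫ + ⟪C (JA (z t) v), w t⟫
        = ⟪gradient HA (z t) + ContinuousLinearMap.adjoint C (w t), JA (z t) v⟫ := by
          rw [e1, e2, inner_add_left]
      _ = 0 := key
  have hval : ⟪gradient HA (z t), JA (z t) v⟫ + (⟪C (z t), w'⟫ + ⟪C (JA (z t) v), w t⟫)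
      + (1/2 : ℝ) * (⟪w t, w'⟫ + ⟪w', w t⟫)
      = -⟪D (w t + C (z t)), w t + C (z t)⟫ := by
    have hsymW : ⟪w t, w'⟫ = ⟪w', w t⟫ := real_inner_comm _ _
    have hsymC : ⟪C (z t), w'⟫ = ⟪w', C (z t)⟫ := real_inner_comm _ _
    have hD : ⟪D (w t + C (z t)), w t + C (z t)⟫
        = ⟪D (w t + C (z t)), w t⟫ + ⟪D (w t + C (z t)), C (z t)⟫ := inner_add_right _ _ _
    have hw1 : ⟪w', w t⟫ = -⟪D (w t + C (z t)), w t⟫ := by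
      rw [hwdef, inner_neg_left]
    have hw2 : ⟪w', C (z t)⟫ = -⟪D (w t + C (z t)), C (z t)⟫ := by
      rw [hwdef, inner_neg_left]
    linarith [hskew]
  rw [← hval]
  exact hsum
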